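/- The graded R-matrix R₁₂(x) = I − x^{-1} P₁₂ satisfies the graded Yang–Baxter equation R₁₂(u−v) R₁₃(u−w) R₂₃(v−w) = R₂₃(v−w) R₁₃(u−w) R₁₂(u−v) on the triple graded tensor product of ℂ^K. -/
import Mathlib


/-- Graded permutation operator acting in factors 1 and 2 of `(ℂ^K)^{⊗3}`:
`P₁₂ (e_a ⊗ e_b ⊗ e_c) = (-1)^{[a][b]} e_b ⊗ e_a ⊗ e_c`. -/
noncomputable def P12 {K : ℕ} (g : Fin K → ℕ) :
    Matrix (Fin K × Fin K × Fin K) (Fin K × Fin K × Fin K) ℂ :=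
  fun p q => if p.1 = q.2.1 ∧ p.2.1 = q.1 ∧ p.2.2 = q.2.2
    then (-1 : ℂ) ^ (g q.1 * g q.2.1) else 0

/-- Graded permutation operator acting in factors 2 and 3:
`P₂₃ (e_a ⊗ e_b ⊗ e_c) = (-1)^{[b][c]} e_a ⊗ e_c ⊗ e_b`. -/
noncomputable def P23 {K : ℕ} (g : Fin K → ℕ) :
    Matrix (Fin K × Fin K × Fin K) (Fin K × Fin K × Fin K) ℂ :=
  fun p q => if p.1 = q.1 ∧ p.2.1 = q.2.2 ∧ p.2.2 = q.2.1
    then (-1 : ℂ) ^ (g q.2.1 * g q.2.2) else 0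

/-- Graded permutation operator acting in factors 1 and 3 (with Koszul signs):
`P₁₃ (e_a ⊗ e_b ⊗ e_c) = (-1)^{[a][b]+[a][c]+[b][c]} e_c ⊗ e_b ⊗ e_a`. -/
noncomputable def P13 {K : ℕ} (g : Fin K → ℕ) :
    Matrix (Fin K × Fin K × Fin K) (Fin K × Fin K × Fin K) ℂ :=
  fun p q => if p.1 = q.2.2 ∧ p.2.1 = q.2.1 ∧ p.2.2 = q.1
    then (-1 : ℂ) ^ (g q.1 * g q.2.1 + g q.1 * g q.2.2 + g q.2.1 * g q.2.2) else 0


lemma yb_L1 {K : ℕ} (g : Fin K → ℕ) : P12 g * P13 g = P13 g * P23 g := by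
  ext ⟨a, b, c⟩ ⟨d, e, f⟩
  simp only [Matrix.mul_apply, P12, P13, P23, Fintype.sum_prod_type, ite_and,
    Finset.sum_ite_eq, Finset.sum_ite_eq', Finset.mem_univ, if_true, mul_ite, ite_mul,
    mul_zero, zero_mul, Finset.sum_ite_irrel, Finset.sum_const_zero]
  have h2 : ∀ n : ℕ, (-1:ℂ)^(n*2) = 1 := fun n => by rw [mul_comm, pow_mul]; norm_num
  split_ifs <;> ring_nf <;> simp [h2]

lemma yb_L2 {K : ℕ} (g : Fin K → ℕ) : P23 g * P12 g = P13 g * P23 g := by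
  ext ⟨a, b, c⟩ ⟨d, e, f⟩
  simp only [Matrix.mul_apply, P12, P13, P23, Fintype.sum_prod_type, ite_and,
    Finset.sum_ite_eq, Finset.sum_ite_eq', Finset.mem_univ, if_true, mul_ite, ite_mul,
    mul_zero, zero_mul, Finset.sum_ite_irrel, Finset.sum_const_zero]
  have h2 : ∀ n : ℕ, (-1:ℂ)^(n*2) = 1 := fun n => by rw [mul_comm, pow_mul]; norm_num
  split_ifs <;> ring_nf <;> simp [h2]

lemma yb_L3 {K : ℕ} (g : Fin K → ℕ) : P13 g * P12 g = P23 g * P13 g := by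
  ext ⟨a, b, c⟩ ⟨d, e, f⟩
  simp only [Matrix.mul_apply, P12, P13, P23, Fintype.sum_prod_type, ite_and,
    Finset.sum_ite_eq, Finset.sum_ite_eq', Finset.mem_univ, if_true, mul_ite, ite_mul,
    mul_zero, zero_mul, Finset.sum_ite_irrel, Finset.sum_const_zero]
  have h2 : ∀ n : ℕ, (-1:ℂ)^(n*2) = 1 := fun n => by rw [mul_comm, pow_mul]; norm_num
  split_ifs <;> ring_nf <;> simp [h2]

lemma yb_L4 {K : ℕ} (g : Fin K → ℕ) : P12 g * P23 g = P23 g * P13 g := by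
  ext ⟨a, b, c⟩ ⟨d, e, f⟩
  simp only [Matrix.mul_apply, P12, P13, P23, Fintype.sum_prod_type, ite_and,
    Finset.sum_ite_eq, Finset.sum_ite_eq', Finset.mem_univ, if_true, mul_ite, ite_mul,
    mul_zero, zero_mul, Finset.sum_ite_irrel, Finset.sum_const_zero]
  have h2 : ∀ n : ℕ, (-1:ℂ)^(n*2) = 1 := fun n => by rw [mul_comm, pow_mul]; norm_num
  split_ifs <;> ring_nf <;> simp [h2]

lemma yb_L5 {K : ℕ} (g : Fin K → ℕ) : P23 g * P23 g = 1 := by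
  ext ⟨a, b, c⟩ ⟨d, e, f⟩
  simp only [Matrix.mul_apply, P12, P13, P23, Fintype.sum_prod_type, ite_and,
    Finset.sum_ite_eq, Finset.sum_ite_eq', Finset.mem_univ, if_true, mul_ite, ite_mul,
    mul_zero, zero_mul, Finset.sum_ite_irrel, Finset.sum_const_zero, Matrix.one_apply,
    Prod.mk.injEq]
  have h2 : ∀ n : ℕ, (-1:ℂ)^(n*2) = 1 := fun n => by rw [mul_comm, pow_mul]; norm_num
  split_ifs <;> ring_nf <;> simp [h2]

/-- the graded R-matrix `R(x) = I − x⁻¹ P` satisfies the graded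
Yang–Baxter equation
`R₁₂(u−v) R₁₃(u−w) R₂₃(v−w) = R₂₃(v−w) R₁₃(u−w) R₁₂(u−v)`. -/
theorem graded_yang_baxter {K : ℕ} (hK : 1 ≤ K) (g : Fin K → ℕ)
    (hg : ∀ a, g a ≤ 1) (u v w : ℂ) (huv : u ≠ v) (huw : u ≠ w) (hvw : v ≠ w) :
    (1 - (u - v)⁻¹ • P12 g) * (1 - (u - w)⁻¹ • P13 g) * (1 - (v - w)⁻¹ • P23 g)
      = (1 - (v - w)⁻¹ • P23 g) * (1 - (u - w)⁻¹ • P13 g)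
          * (1 - (u - v)⁻¹ • P12 g) := by
  have h1 : u - v ≠ 0 := sub_ne_zero.mpr huv
  have h2 : u - w ≠ 0 := sub_ne_zero.mpr huw
  have h3 : v - w ≠ 0 := sub_ne_zero.mpr hvw
  have hkey : (u-v)⁻¹ * (u-w)⁻¹ - (u-v)⁻¹ * (v-w)⁻¹ + (u-w)⁻¹ * (v-w)⁻¹ = 0 := by
    field_simp
    ring
  have t1 : P12 g * P13 g * P23 g = P13 g := by
    rw [yb_L1, mul_assoc, yb_L5 g, mul_one]
  have t2 : P23 g * P13 g * P12 g = P13 g := by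
    rw [mul_assoc, yb_L3, ← mul_assoc, yb_L5 g, one_mul]
  simp only [mul_sub, sub_mul, mul_one, one_mul, Matrix.smul_mul, Matrix.mul_smul,
    smul_smul]
  rw [t1, t2, yb_L1 g, yb_L2 g, yb_L3 g, yb_L4 g]
  match_scalars <;> first | ring1 | linear_combination hkey | linear_combination -hkey
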